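/- For k ∈ ℕ, the fraction of units among all polyfunctions over ℤ/3^kℤ is 8/27; equivalently, the number of invertible elements of the ring G(ℤ/3^kℤ) equals (2/3)^3 · Ψ(3^k), where Ψ(3^k) = 3^{∑_{i=1}^k s(3^i)}. -/

import Mathlib

/-- The Smarandache function: the least `k` with `n ∣ k!`. -/
noncomputable def smarandache (n : ℕ) : ℕ := sInf {k : ℕ | n ∣ Nat.factorial k}

/-- The ring of polyfunctions over a commutative ring `R`. -/
noncomputable def polyfunRing (R : Type) [CommRing R] : Subring (R → R) :=
  (Pi.ringHom (fun x : R => Polynomial.evalRingHom x)).range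

open Polynomial Finset Nat


section Generic

lemma pi_isUnit_iff {ι R : Type*} [CommMonoid R] {f : ι → R} :
    IsUnit f ↔ ∀ i, IsUnit (f i) := by
  constructor
  · rintro ⟨u, rfl⟩ i
    exact ⟨⟨(u : ι → R) i, (↑u⁻¹ : ι → R) i,
      congrFun u.mul_inv i, congrFun u.inv_mul i⟩, rfl⟩
  · intro h
    refine IsUnit.of_mul_eq_one (a := f) (fun i => ((h i).unit⁻¹ : Rˣ)) ?_
    funext i
    exact (h i).mul_val_inv

lemma card_units_eq {M : Type*} [CommMonoid M] :
    Nat.card Mˣ = Nat.card {x : M // IsUnit x} :=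
  Nat.card_congr ⟨fun u => ⟨u, u.isUnit⟩, fun x => x.2.unit,
    fun u => Units.ext u.isUnit.unit_spec, fun x => Subtype.ext x.2.unit_spec⟩

lemma card_preimage {A B : Type*} [AddCommGroup A] [AddCommGroup B] (F : A →+ B)
    (hs : Function.Surjective F) (T : Set B) :
    Nat.card (F ⁻¹' T) = Nat.card T * Nat.card F.ker := by
  have hsec : ∀ b, F (Function.surjInv hs b) = b := Function.surjInv_eq hs
  have e : (F ⁻¹' T) ≃ T × F.ker :=
    { toFun := fun a => (⟨F a, a.2⟩, ⟨(a : A) - Function.surjInv hs (F a), by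
        simp [AddMonoidHom.mem_ker, map_sub, hsec]⟩)
      invFun := fun tk => ⟨Function.surjInv hs tk.1 + tk.2.1, by
        have h0 : F tk.2.1 = 0 := tk.2.2
        simp only [Set.mem_preimage, map_add, hsec, h0, add_zero]
        exact tk.1.2⟩
      left_inv := fun a => by
        apply Subtype.ext
        simp
      right_inv := fun tk => by
        have h0 : F tk.2.1 = 0 := tk.2.2
        ext
        · simp [hsec, h0]
        · simp [hsec, h0] }
  rw [Nat.card_congr e, Nat.card_prod]

lemma smarandache_dvd {n : ℕ} (hn : 0 < n) : n ∣ Nat.factorial (smarandache n) :=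
  Nat.sInf_mem (⟨n, Nat.dvd_factorial hn le_rfl⟩ : {k : ℕ | n ∣ Nat.factorial k}.Nonempty)

lemma lt_smarandache_iff {n j : ℕ} (hn : 0 < n) : j < smarandache n ↔ ¬ n ∣ j ! := by
  constructor
  · intro h hd
    have := Nat.sInf_le (s := {k : ℕ | n ∣ Nat.factorial k}) hd
    rw [smarandache] at h
    omega
  · intro hd
    by_contra h
    exact hd ((smarandache_dvd hn).trans (Nat.factorial_dvd_factorial (by omega)))

lemma smarandache_le {n : ℕ} (hn : 0 < n) : smarandache n ≤ n :=
  Nat.sInf_le (Nat.dvd_factorial hn le_rfl)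

lemma smarandache_mono {a b : ℕ} (hb : 0 < b) (h : a ∣ b) :
    smarandache a ≤ smarandache b :=
  Nat.sInf_le (h.trans (smarandache_dvd hb))

end Generic

section Counting

variable (n : ℕ) [NeZero n]

/-- The basic polyfunctions: falling factorials. -/
def phi (j : ℕ) : ZMod n → ZMod n := fun x => ((x.val.descFactorial j : ℕ) : ZMod n)

lemma phi_eq_eval (j : ℕ) (x : ZMod n) :
    (descPochhammer (ZMod n) j).eval x = phi n j x := by
  conv_lhs => rw [← ZMod.natCast_zmod_val x]
  rw [descPochhammer_eval_eq_descFactorial]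
  rfl

lemma evalfun_mem (p : Polynomial (ZMod n)) :
    (fun x => p.eval x) ∈ polyfunRing (ZMod n) :=
  ⟨p, rfl⟩

lemma phi_mem (j : ℕ) : phi n j ∈ polyfunRing (ZMod n) :=
  ⟨descPochhammer (ZMod n) j, funext fun x => phi_eq_eval n j x⟩

lemma monic_dp (j : ℕ) : (descPochhammer (ZMod n) j).Monic := by
  have := (monic_descPochhammer ℤ j).map (Int.castRingHom (ZMod n))
  rwa [descPochhammer_map] at this

variable [Fact (1 < n)]

lemma natDegree_dp (j : ℕ) : (descPochhammer (ZMod n) j).natDegree = j := by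
  have := (monic_descPochhammer ℤ j).natDegree_map (Int.castRingHom (ZMod n))
  rw [descPochhammer_map, descPochhammer_natDegree (R := ℤ)] at this
  exact this

/-- The linear map assembling coefficient vectors into polyfunctions. -/
noncomputable def Phi : (Fin (smarandache n) → ZMod n) →ₗ[ZMod n] (ZMod n → ZMod n) where
  toFun c := fun x => ∑ j, c j * phi n (j : ℕ) x
  map_add' c d := by
    funext x
    simp [add_mul, Finset.sum_add_distrib]
  map_smul' r c := by
    funext x
    simp [Finset.mul_sum, mul_assoc]

lemma Phi_apply (c : Fin (smarandache n) → ZMod n) (x : ZMod n) :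
    Phi n c x = ∑ j, c j * phi n (j : ℕ) x := rfl

lemma phi_smarandache_eq_zero (x : ZMod n) : phi n (smarandache n) x = 0 := by
  rw [phi, ZMod.natCast_eq_zero_iff]
  exact ((smarandache_dvd (NeZero.pos n)).trans
    (Nat.factorial_dvd_descFactorial _ _))

lemma smarandache_pos : 0 < smarandache n := by
  rw [pos_iff_ne_zero]
  intro h
  have h1 : ¬ n ∣ Nat.factorial 0 := by
    rw [Nat.factorial_zero, Nat.dvd_one]
    exact Nat.ne_of_gt (Fact.out : 1 < n)
  have := (lt_smarandache_iff (NeZero.pos n)).mpr h1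
  omega

lemma phi_fin_mem_range (j : Fin (smarandache n)) :
    phi n (j : ℕ) ∈ LinearMap.range (Phi n) := by
  refine ⟨Pi.single j 1, ?_⟩
  funext x
  rw [Phi_apply, Finset.sum_eq_single j]
  · simp
  · intro i _ hij
    simp [Pi.single_apply, hij]
  · simp

lemma evalfun_mem_range (p : Polynomial (ZMod n)) :
    (fun x => p.eval x) ∈ LinearMap.range (Phi n) := by
  suffices H : ∀ d (p : Polynomial (ZMod n)), p.natDegree < d →
      (fun x => p.eval x) ∈ LinearMap.range (Phi n) from H _ p (Nat.lt_succ_self _)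
  intro d
  induction d with
  | zero => exact fun p h => absurd h (Nat.not_lt_zero _)
  | succ d ih =>
    intro p hp
    by_cases h0 : p = 0
    · subst h0
      have : (fun x : ZMod n => (0 : Polynomial (ZMod n)).eval x) = 0 := by
        funext x; simp
      rw [this]
      exact zero_mem _
    · set dp := p.natDegree with hdp
      set m := min dp (smarandache n) with hm
      set q : Polynomial (ZMod n) := X ^ (dp - m) * descPochhammer (ZMod n) m with hq
      have hqm : q.Monic := (monic_X_pow _).mul (monic_dp n m)
      have hqd : q.natDegree = dp := by
        rw [hq, (monic_X_pow _).natDegree_mul (monic_dp n m), natDegree_X_pow, natDegree_dp]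
        omega
      have hqfun : (fun x => q.eval x) ∈ LinearMap.range (Phi n) := by
        rcases lt_or_ge dp (smarandache n) with hlt | hge
        · have hmm : m = dp := min_eq_left hlt.le
          have : (fun x => q.eval x) = phi n ((⟨m, by omega⟩ : Fin (smarandache n)) : ℕ) := by
            funext x
            simp only [hq, eval_mul, eval_pow, eval_X, phi_eq_eval, hmm, Nat.sub_self,
              pow_zero, one_mul, Fin.val_mk]
          rw [this]
          exact phi_fin_mem_range n _
        · have hmm : m = smarandache n := min_eq_right hge
          have : (fun x => q.eval x) = 0 := by
            funext x
            simp only [hq, eval_mul, phi_eq_eval, hmm, phi_smarandache_eq_zero, mul_zero]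
            rfl
          rw [this]
          exact zero_mem _
      set r : Polynomial (ZMod n) := p - C p.leadingCoeff * q with hr
      have hsplit : (fun x => p.eval x) =
          (fun x => r.eval x) + p.leadingCoeff • fun x => q.eval x := by
        funext x
        simp only [hr, eval_sub, eval_mul, eval_C, Pi.add_apply, Pi.smul_apply, smul_eq_mul]
        ring
      by_cases hr0 : r = 0
      · rw [hsplit, hr0]
        have h00 : (fun x : ZMod n => (0 : Polynomial (ZMod n)).eval x) = 0 := by
          funext x; simp
        rw [h00, zero_add]
        exact Submodule.smul_mem _ _ hqfun
      · have hlc : p.leadingCoeff ≠ 0 := leadingCoeff_ne_zero.mpr h0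
        have hCq : (C p.leadingCoeff * q).leadingCoeff = p.leadingCoeff := by
          rw [leadingCoeff_mul' (by rw [leadingCoeff_C, hqm.leadingCoeff, mul_one]; exact hlc),
            leadingCoeff_C, hqm.leadingCoeff, mul_one]
        have hCq0 : C p.leadingCoeff * q ≠ 0 := fun h => hlc (by rw [← hCq, h, leadingCoeff_zero])
        have hdegCq : (C p.leadingCoeff * q).degree = p.degree := by
          rw [degree_eq_natDegree hCq0, degree_eq_natDegree h0]
          congr 1
          rw [mul_comm, hqm.natDegree_mul' (Polynomial.C_ne_zero.mpr hlc), hqd, natDegree_C,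
            add_zero]
        have hdeg : r.degree < p.degree := by
          rw [hr]
          exact degree_sub_lt hdegCq.symm h0 (by rw [hCq])
        have hdn : r.natDegree < dp := natDegree_lt_natDegree hr0 hdeg
        rw [hsplit]
        exact add_mem (ih r (by omega)) (Submodule.smul_mem _ _ hqfun)

end Counting

section Counting2

variable (n : ℕ) [NeZero n] [Fact (1 < n)]

lemma range_Phi_eq :
    ((polyfunRing (ZMod n) : Subring (ZMod n → ZMod n)) : Set (ZMod n → ZMod n))
      = (LinearMap.range (Phi n) : Set (ZMod n → ZMod n)) := by
  apply Set.eq_of_subset_of_subset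
  · rintro f ⟨p, rfl⟩
    exact evalfun_mem_range n p
  · rintro f ⟨c, rfl⟩
    have : (Phi n c) = fun x => (∑ j : Fin (smarandache n),
        C (c j) * descPochhammer (ZMod n) (j : ℕ)).eval x := by
      funext x
      rw [eval_finset_sum, Phi_apply]
      refine Finset.sum_congr rfl fun j _ => ?_
      rw [eval_mul, eval_C, phi_eq_eval]
    rw [this]
    exact evalfun_mem n _

lemma mem_ker_Phi_iff (c : Fin (smarandache n) → ZMod n) :
    c ∈ LinearMap.ker (Phi n) ↔
      ∀ j : Fin (smarandache n), ((Nat.factorial (j : ℕ) : ℕ) : ZMod n) * c j = 0 := by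
  constructor
  · intro h
    have key : ∀ j (hj : j < smarandache n),
        ((Nat.factorial j : ℕ) : ZMod n) * c ⟨j, hj⟩ = 0 := by
      intro j
      induction j using Nat.strong_induction_on with
      | _ j IH =>
        intro hj
        have hx := congrFun (LinearMap.mem_ker.mp h) ((j : ℕ) : ZMod n)
        have hval : (((j : ℕ) : ZMod n)).val = j :=
          ZMod.val_natCast_of_lt (lt_of_lt_of_le hj (smarandache_le (NeZero.pos n)))
        rw [Phi_apply] at hx
        simp only [phi, hval, Pi.zero_apply] at hx
        rw [Finset.sum_eq_single (⟨j, hj⟩ : Fin (smarandache n))] at hx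
        · simp only [Fin.val_mk, Nat.descFactorial_self] at hx
          rw [mul_comm]
          exact hx
        · rintro ⟨i, hi⟩ _ hij
          simp only [Fin.val_mk]
          have hne : i ≠ j := fun h' => hij (by subst h'; rfl)
          rcases hne.lt_or_gt with hlt | hgt
          · rw [Nat.descFactorial_eq_factorial_mul_choose, Nat.cast_mul]
            calc c ⟨i, hi⟩ * (((Nat.factorial i : ℕ) : ZMod n) * ((j.choose i : ℕ) : ZMod n))
                = (((Nat.factorial i : ℕ) : ZMod n) * c ⟨i, hi⟩) * ((j.choose i : ℕ) : ZMod n) := by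
                  ring
              _ = 0 := by rw [IH i hlt hi, zero_mul]
          · rw [Nat.descFactorial_eq_zero_iff_lt.mpr hgt, Nat.cast_zero, mul_zero]
        · intro hmem
          exact absurd (Finset.mem_univ _) hmem
    intro j
    have := key (j : ℕ) j.2
    simpa using this
  · intro h
    rw [LinearMap.mem_ker]
    funext x
    rw [Phi_apply]
    simp only [Pi.zero_apply]
    refine Finset.sum_eq_zero fun j _ => ?_
    rw [phi, Nat.descFactorial_eq_factorial_mul_choose, Nat.cast_mul]
    calc c j * (((Nat.factorial (j:ℕ) : ℕ) : ZMod n) * (x.val.choose (j:ℕ) : ZMod n))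
        = ((Nat.factorial (j:ℕ) : ℕ) * c j) * (x.val.choose (j:ℕ) : ZMod n) := by ring
      _ = 0 := by rw [h j, zero_mul]

lemma card_ann (a : ℕ) :
    Nat.card {x : ZMod n // (a : ZMod n) * x = 0} = n.gcd a := by
  set F : ZMod n →+ ZMod n := AddMonoidHom.mulLeft ((a : ℕ) : ZMod n) with hF
  have hker : ∀ x, x ∈ F.ker ↔ (a : ZMod n) * x = 0 := by
    intro x; rw [AddMonoidHom.mem_ker]; rfl
  have hrange : F.range = AddSubgroup.zmultiples ((a : ℕ) : ZMod n) := by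
    ext x
    constructor
    · rintro ⟨y, rfl⟩
      refine ⟨(y.val : ℤ), ?_⟩
      show (y.val : ℤ) • ((a : ℕ) : ZMod n) = _
      rw [zsmul_eq_mul]
      push_cast
      rw [ZMod.natCast_zmod_val]
      show _ = (a : ZMod n) * y
      ring
    · rintro ⟨z, rfl⟩
      refine ⟨(z : ZMod n), ?_⟩
      show ((a : ℕ) : ZMod n) * (z : ZMod n) = z • ((a : ℕ) : ZMod n)
      rw [zsmul_eq_mul]
      ring
  have hcardrange : Nat.card F.range = n / n.gcd a := by
    rw [hrange, Nat.card_zmultiples, ZMod.addOrderOf_coe a (NeZero.ne n)]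
  have hiso := AddSubgroup.card_eq_card_quotient_mul_card_addSubgroup F.ker
  have hqr : Nat.card (ZMod n ⧸ F.ker) = Nat.card F.range :=
    Nat.card_congr (QuotientAddGroup.quotientKerEquivRange F).toEquiv
  have hcard : Nat.card (ZMod n) = n := Nat.card_zmod n
  have hsub : Nat.card {x : ZMod n // (a : ZMod n) * x = 0} = Nat.card F.ker :=
    Nat.card_congr (Equiv.subtypeEquivRight fun x => (hker x).symm)
  rw [hsub]
  have hgdvd : n.gcd a ∣ n := Nat.gcd_dvd_left n a
  have hgpos : 0 < n.gcd a := Nat.gcd_pos_of_pos_left a (NeZero.pos n)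
  have hdivpos : 0 < n / n.gcd a := Nat.div_pos (Nat.le_of_dvd (NeZero.pos n) hgdvd) hgpos
  have heq : Nat.card F.ker * (n / n.gcd a) = n.gcd a * (n / n.gcd a) := by
    rw [Nat.mul_div_cancel' hgdvd]
    rw [hcard, hqr, hcardrange] at hiso
    rw [mul_comm] at hiso
    omega
  exact Nat.eq_of_mul_eq_mul_right hdivpos heq

lemma card_ker_Phi :
    Nat.card (LinearMap.ker (Phi n)) = ∏ j ∈ Finset.range (smarandache n), n.gcd (Nat.factorial j) := by
  have e1 : (LinearMap.ker (Phi n)) ≃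
      {c : Fin (smarandache n) → ZMod n //
        ∀ j : Fin (smarandache n), ((Nat.factorial (j : ℕ) : ℕ) : ZMod n) * c j = 0} :=
    Equiv.subtypeEquivRight fun c => mem_ker_Phi_iff n c
  have e2 : {c : Fin (smarandache n) → ZMod n //
        ∀ j : Fin (smarandache n), ((Nat.factorial (j : ℕ) : ℕ) : ZMod n) * c j = 0} ≃
      ∀ j : Fin (smarandache n), {x : ZMod n // ((Nat.factorial (j : ℕ) : ℕ) : ZMod n) * x = 0} :=
    Equiv.subtypePiEquivPi
      (p := fun (j : Fin (smarandache n)) (x : ZMod n) => ((Nat.factorial (j : ℕ) : ℕ) : ZMod n) * x = 0)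
  rw [Nat.card_congr (e1.trans e2), Nat.card_pi]
  rw [Fin.prod_univ_eq_prod_range (fun j => Nat.card {x : ZMod n // ((Nat.factorial j : ℕ) : ZMod n) * x = 0})]
  exact Finset.prod_congr rfl fun j _ => card_ann n (Nat.factorial j)

lemma card_polyfunRing_mul :
    Nat.card (polyfunRing (ZMod n)) * ∏ j ∈ Finset.range (smarandache n), n.gcd (Nat.factorial j)
      = n ^ (smarandache n) := by
  classical
  set F := (Phi n).toAddMonoidHom with hF
  have hdom : Nat.card (Fin (smarandache n) → ZMod n) = n ^ (smarandache n) := by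
    rw [Nat.card_pi]
    simp [Nat.card_zmod]
  have hiso := AddSubgroup.card_eq_card_quotient_mul_card_addSubgroup F.ker
  have hqr : Nat.card ((Fin (smarandache n) → ZMod n) ⧸ F.ker) = Nat.card F.range :=
    Nat.card_congr (QuotientAddGroup.quotientKerEquivRange F).toEquiv
  have hkerEq : Nat.card F.ker = Nat.card (LinearMap.ker (Phi n)) :=
    Nat.card_congr (Equiv.subtypeEquivRight fun c => by
      rw [AddMonoidHom.mem_ker, LinearMap.mem_ker]; rfl)
  have hrangeEq : Nat.card F.range = Nat.card (polyfunRing (ZMod n)) := by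
    refine Nat.card_congr (Equiv.subtypeEquivRight fun f => ?_).symm
    rw [AddMonoidHom.mem_range]
    constructor
    · intro hf
      have : f ∈ (LinearMap.range (Phi n) : Set (ZMod n → ZMod n)) := by
        rw [← range_Phi_eq n]; exact hf
      obtain ⟨c, hc⟩ := this
      exact ⟨c, hc⟩
    · rintro ⟨c, rfl⟩
      have : (Phi n) c ∈ (LinearMap.range (Phi n) : Set (ZMod n → ZMod n)) := ⟨c, rfl⟩
      rw [← range_Phi_eq n] at this
      exact this
  rw [← card_ker_Phi n, ← hkerEq, ← hrangeEq, ← hqr]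
  rw [hiso] at hdom
  exact hdom

end Counting2

section Arith

lemma gcd_pow_three (k j : ℕ) (hk : 1 ≤ k) :
    Nat.gcd (3 ^ k) (Nat.factorial j) * 3 ^ ((Finset.Icc 1 k).filter
      (fun i => ¬ 3 ^ i ∣ Nat.factorial j)).card = 3 ^ k := by
  have h3 : Nat.Prime 3 := by norm_num
  have hfac : Nat.factorial j ≠ 0 := Nat.factorial_ne_zero j
  set v := (Nat.factorial j).factorization 3 with hv
  -- gcd = 3 ^ min k v
  have hgcd : Nat.gcd (3 ^ k) (Nat.factorial j) = 3 ^ (min k v) := by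
    have hd : Nat.gcd (3 ^ k) (Nat.factorial j) ∣ 3 ^ k := Nat.gcd_dvd_left _ _
    obtain ⟨t, ht, heq⟩ := (Nat.dvd_prime_pow h3).mp hd
    have hfcgcd := Nat.factorization_gcd (pow_ne_zero k (by norm_num : (3:ℕ) ≠ 0)) hfac
    have h1 : (Nat.gcd (3 ^ k) (Nat.factorial j)).factorization 3 = min k v := by
      rw [hfcgcd]
      rw [Finsupp.inf_apply]
      congr 1
      rw [Nat.Prime.factorization_pow h3, Finsupp.single_eq_same]
    rw [heq] at h1 ⊢
    rw [Nat.Prime.factorization_pow h3, Finsupp.single_eq_same] at h1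
    rw [h1]
  -- filter card
  have hdvd_iff : ∀ i, 3 ^ i ∣ Nat.factorial j ↔ i ≤ v := fun i =>
    (Nat.Prime.pow_dvd_iff_le_factorization h3 hfac)
  have hfilter : ((Finset.Icc 1 k).filter (fun i => ¬ 3 ^ i ∣ Nat.factorial j))
      = Finset.Icc (v + 1) k := by
    ext i
    simp only [Finset.mem_filter, Finset.mem_Icc, hdvd_iff]
    omega
  rw [hgcd, hfilter, Nat.card_Icc, ← pow_add]
  congr 1
  omega

lemma sum_smarandache (k : ℕ) (hk : 1 ≤ k) :
    ∑ j ∈ Finset.range (smarandache (3 ^ k)),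
        ((Finset.Icc 1 k).filter (fun i => ¬ 3 ^ i ∣ Nat.factorial j)).card
      = ∑ i ∈ Finset.Icc 1 k, smarandache (3 ^ i) := by
  have h3pos : ∀ i : ℕ, 0 < 3 ^ i := fun i => pow_pos (by norm_num) i
  calc ∑ j ∈ Finset.range (smarandache (3 ^ k)),
        ((Finset.Icc 1 k).filter (fun i => ¬ 3 ^ i ∣ Nat.factorial j)).card
      = ∑ j ∈ Finset.range (smarandache (3 ^ k)), ∑ i ∈ Finset.Icc 1 k,
          (if ¬ 3 ^ i ∣ Nat.factorial j then 1 else 0) := by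
        refine Finset.sum_congr rfl fun j _ => ?_
        rw [Finset.card_filter]
    _ = ∑ i ∈ Finset.Icc 1 k, ∑ j ∈ Finset.range (smarandache (3 ^ k)),
          (if ¬ 3 ^ i ∣ Nat.factorial j then 1 else 0) := Finset.sum_comm
    _ = ∑ i ∈ Finset.Icc 1 k, smarandache (3 ^ i) := by
        refine Finset.sum_congr rfl fun i hi => ?_
        rw [← Finset.card_filter]
        have hle : smarandache (3 ^ i) ≤ smarandache (3 ^ k) := by
          refine smarandache_mono (h3pos k) (pow_dvd_pow 3 ?_)
          exact (Finset.mem_Icc.mp hi).2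
        have : ((Finset.range (smarandache (3 ^ k))).filter
            (fun j => ¬ 3 ^ i ∣ Nat.factorial j)) = Finset.range (smarandache (3 ^ i)) := by
          ext j
          simp only [Finset.mem_filter, Finset.mem_range]
          rw [← lt_smarandache_iff (h3pos i)]
          omega
        rw [this, Finset.card_range]

lemma card_polyfunRing_three_pow (k : ℕ) (hk : 1 ≤ k) :
    Nat.card (polyfunRing (ZMod (3 ^ k)))
      = 3 ^ (∑ i ∈ Finset.Icc 1 k, smarandache (3 ^ i)) := by
  haveI : NeZero (3 ^ k) := ⟨pow_ne_zero k (by norm_num)⟩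
  haveI : Fact (1 < 3 ^ k) := ⟨Nat.one_lt_pow (by omega) (by norm_num)⟩
  have hmain := card_polyfunRing_mul (3 ^ k)
  set M := smarandache (3 ^ k) with hM
  have hfact : ∀ j, Nat.gcd (3 ^ k) (Nat.factorial j) * 3 ^ ((Finset.Icc 1 k).filter
      (fun i => ¬ 3 ^ i ∣ Nat.factorial j)).card = 3 ^ k := fun j => gcd_pow_three k j hk
  have hsplit : ((3:ℕ) ^ k) ^ M = (∏ j ∈ Finset.range M, Nat.gcd (3 ^ k) (Nat.factorial j))
      * 3 ^ (∑ i ∈ Finset.Icc 1 k, smarandache (3 ^ i)) := by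
    calc ((3:ℕ) ^ k) ^ M = ∏ _j ∈ Finset.range M, 3 ^ k := by
          rw [Finset.prod_const, Finset.card_range]
      _ = ∏ j ∈ Finset.range M, (Nat.gcd (3 ^ k) (Nat.factorial j) * 3 ^ ((Finset.Icc 1 k).filter
            (fun i => ¬ 3 ^ i ∣ Nat.factorial j)).card) :=
          Finset.prod_congr rfl fun j _ => (hfact j).symm
      _ = (∏ j ∈ Finset.range M, Nat.gcd (3 ^ k) (Nat.factorial j))
            * ∏ j ∈ Finset.range M, 3 ^ ((Finset.Icc 1 k).filter
            (fun i => ¬ 3 ^ i ∣ Nat.factorial j)).card := Finset.prod_mul_distrib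
      _ = (∏ j ∈ Finset.range M, Nat.gcd (3 ^ k) (Nat.factorial j))
            * 3 ^ (∑ i ∈ Finset.Icc 1 k, smarandache (3 ^ i)) := by
          rw [Finset.prod_pow_eq_pow_sum, sum_smarandache k hk]
  rw [hsplit] at hmain
  have hpos : 0 < ∏ j ∈ Finset.range M, Nat.gcd (3 ^ k) (Nat.factorial j) := by
    refine Finset.prod_pos fun j _ => Nat.gcd_pos_of_pos_left _ (pow_pos (by norm_num) k)
  calc Nat.card (polyfunRing (ZMod (3 ^ k)))
      = Nat.card (polyfunRing (ZMod (3 ^ k))) * (∏ j ∈ Finset.range M, Nat.gcd (3 ^ k) (Nat.factorial j)) / (∏ j ∈ Finset.range M, Nat.gcd (3 ^ k) (Nat.factorial j)) := by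
        rw [Nat.mul_div_cancel _ hpos]
    _ = 3 ^ (∑ i ∈ Finset.Icc 1 k, smarandache (3 ^ i)) := by
        rw [hmain, mul_comm]
        rw [Nat.mul_div_cancel _ hpos]

end Arith

section Units

lemma interp3_key : ∀ x a : ZMod 3, (1 - (x - a)^2) = if a = x then 1 else 0 := by decide

lemma interp3 (g : ZMod 3 → ZMod 3) : ∃ q : Polynomial (ZMod 3), ∀ x, q.eval x = g x := by
  refine ⟨∑ a : ZMod 3, Polynomial.C (g a) * (1 - (Polynomial.X - Polynomial.C a)^2),
    fun x => ?_⟩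
  rw [Polynomial.eval_finset_sum]
  have : ∀ a : ZMod 3, (Polynomial.C (g a) * (1 - (Polynomial.X - Polynomial.C a)^2)).eval x
      = if a = x then g a else 0 := by
    intro a
    simp only [Polynomial.eval_mul, Polynomial.eval_C, Polynomial.eval_sub, Polynomial.eval_one,
      Polynomial.eval_pow, Polynomial.eval_X]
    rw [interp3_key x a]
    split <;> simp
  rw [Finset.sum_congr rfl fun a _ => this a]
  rw [Finset.sum_ite_eq' Finset.univ x g]
  simp

lemma three_dvd_pow (k : ℕ) (hk : 1 ≤ k) : (3:ℕ) ∣ 3 ^ k := dvd_pow_self 3 (by omega)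

/-- Reduction mod 3 of functions on `ZMod (3^k)`. -/
noncomputable def rho (k : ℕ) (hk : 1 ≤ k) : (ZMod (3 ^ k) → ZMod (3 ^ k)) →+* (ZMod 3 → ZMod 3) :=
  Pi.ringHom fun y => (ZMod.castHom (three_dvd_pow k hk) (ZMod 3)).comp
    (Pi.evalRingHom (fun _ : ZMod (3 ^ k) => ZMod (3 ^ k)) (((y.val : ℕ) : ZMod (3 ^ k))))

lemma rho_apply (k : ℕ) (hk : 1 ≤ k) (f : ZMod (3 ^ k) → ZMod (3 ^ k)) (y : ZMod 3) :
    rho k hk f y = ZMod.castHom (three_dvd_pow k hk) (ZMod 3) (f ((y.val : ℕ) : ZMod (3 ^ k))) :=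
  rfl

lemma rho_evalfun (k : ℕ) (hk : 1 ≤ k) (p : Polynomial (ZMod (3 ^ k))) :
    rho k hk (fun x => p.eval x)
      = fun y => (p.map (ZMod.castHom (three_dvd_pow k hk) (ZMod 3))).eval y := by
  haveI : NeZero (3:ℕ) := ⟨by norm_num⟩
  funext y
  rw [rho_apply]
  rw [← Polynomial.eval₂_at_apply (ZMod.castHom (three_dvd_pow k hk) (ZMod 3))]
  rw [← Polynomial.eval_map]
  congr 1
  rw [map_natCast]
  exact ZMod.natCast_zmod_val y

lemma rho_compat (k : ℕ) (hk : 1 ≤ k) (p : Polynomial (ZMod (3 ^ k))) (x : ZMod (3 ^ k)) :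
    ZMod.castHom (three_dvd_pow k hk) (ZMod 3) (p.eval x)
      = rho k hk (fun x => p.eval x) (ZMod.castHom (three_dvd_pow k hk) (ZMod 3) x) := by
  rw [rho_evalfun]
  rw [← Polynomial.eval₂_at_apply (ZMod.castHom (three_dvd_pow k hk) (ZMod 3))]
  rw [← Polynomial.eval_map]

/-- The reduction restricted to the polyfunction ring. -/
noncomputable def rho' (k : ℕ) (hk : 1 ≤ k) : (polyfunRing (ZMod (3 ^ k))) →+* (ZMod 3 → ZMod 3) :=
  (rho k hk).comp (Subring.subtype (polyfunRing (ZMod (3 ^ k))))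

lemma rho'_surjective (k : ℕ) (hk : 1 ≤ k) : Function.Surjective (rho' k hk) := by
  intro g
  obtain ⟨q, hq⟩ := interp3 g
  obtain ⟨pz, hpz⟩ := Polynomial.map_surjective (Int.castRingHom (ZMod 3))
    ZMod.intCast_surjective q
  refine ⟨⟨fun x => (pz.map (Int.castRingHom (ZMod (3 ^ k)))).eval x,
    ⟨pz.map (Int.castRingHom (ZMod (3 ^ k))), rfl⟩⟩, ?_⟩
  show rho k hk (fun x => (pz.map (Int.castRingHom (ZMod (3 ^ k)))).eval x) = g
  rw [rho_evalfun, Polynomial.map_map]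
  have hcomp : (ZMod.castHom (three_dvd_pow k hk) (ZMod 3)).comp
      (Int.castRingHom (ZMod (3 ^ k))) = Int.castRingHom (ZMod 3) := by
    ext1 z
    simp
  rw [hcomp, hpz]
  funext y
  exact hq y

lemma isUnit_iff_rho (k : ℕ) (hk : 1 ≤ k) (f : polyfunRing (ZMod (3 ^ k))) :
    IsUnit f ↔ IsUnit (rho' k hk f) := by
  haveI : NeZero (3 ^ k) := ⟨pow_ne_zero k (by norm_num)⟩
  constructor
  · exact fun h => h.map (rho' k hk)
  · intro h
    have hy : ∀ y, rho' k hk f y ≠ 0 := by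
      intro y
      exact (isUnit_iff_ne_zero.mp (pi_isUnit_iff.mp h y))
    obtain ⟨p, hp⟩ := f.2
    have hfp : (f : ZMod (3 ^ k) → ZMod (3 ^ k)) = fun x => p.eval x := hp.symm
    have hfx : ∀ x, IsUnit ((f : ZMod (3 ^ k) → ZMod (3 ^ k)) x) := by
      intro x
      have h1 : ZMod.castHom (three_dvd_pow k hk) (ZMod 3)
          ((f : ZMod (3 ^ k) → ZMod (3 ^ k)) x) ≠ 0 := by
        rw [hfp, rho_compat k hk]
        have : rho k hk (fun x => p.eval x) = rho' k hk f := by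
          rw [← hfp]
          rfl
        rw [this]
        exact hy _
      have h2 : ¬ ((3:ℕ) ∣ ((f : ZMod (3 ^ k) → ZMod (3 ^ k)) x).val) := by
        intro hdvd
        apply h1
        have : ((f : ZMod (3 ^ k) → ZMod (3 ^ k)) x)
            = ((((f : ZMod (3 ^ k) → ZMod (3 ^ k)) x).val : ℕ) : ZMod (3 ^ k)) :=
          (ZMod.natCast_zmod_val _).symm
        rw [this, map_natCast, ZMod.natCast_eq_zero_iff]
        exact hdvd
      have h3 : Nat.Coprime (((f : ZMod (3 ^ k) → ZMod (3 ^ k)) x).val) (3 ^ k) :=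
        Nat.Coprime.pow_right k
          (((Nat.Prime.coprime_iff_not_dvd (by norm_num)).mpr h2).symm)
      rw [← ZMod.natCast_zmod_val ((f : ZMod (3 ^ k) → ZMod (3 ^ k)) x)]
      exact (ZMod.isUnit_iff_coprime _ _).mpr h3
    -- construct the inverse as a power of f
    set t := Fintype.card (ZMod (3 ^ k))ˣ with ht
    have htpos : 0 < t := Fintype.card_pos
    have hft : f ^ t = 1 := by
      apply Subtype.ext
      funext x
      have hcoe : ((f ^ t : polyfunRing (ZMod (3 ^ k))) : ZMod (3 ^ k) → ZMod (3 ^ k)) x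
          = ((f : ZMod (3 ^ k) → ZMod (3 ^ k)) x) ^ t := by
        rw [SubmonoidClass.coe_pow]
        rfl
      rw [hcoe]
      have hu := hfx x
      calc ((f : ZMod (3 ^ k) → ZMod (3 ^ k)) x) ^ t = ((hu.unit : (ZMod (3 ^ k))ˣ) : ZMod (3 ^ k)) ^ t := by
            rw [hu.unit_spec]
        _ = (((hu.unit ^ t : (ZMod (3 ^ k))ˣ)) : ZMod (3 ^ k)) := by
            rw [Units.val_pow_eq_pow_val]
        _ = 1 := by rw [pow_card_eq_one]; rfl
    refine IsUnit.of_mul_eq_one (a := f) (f ^ (t - 1)) ?_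
    calc f * f ^ (t - 1) = f ^ (1 + (t - 1)) := by rw [pow_add, pow_one]
      _ = 1 := by rw [show 1 + (t - 1) = t by omega, hft]

end Units

section Final

lemma card_units_zmod3_fun : Nat.card {g : ZMod 3 → ZMod 3 | IsUnit g} = 8 := by
  have hset : {g : ZMod 3 → ZMod 3 | IsUnit g} = {g | ∀ y, g y ≠ 0} := by
    ext g
    simp only [Set.mem_setOf_eq, pi_isUnit_iff, isUnit_iff_ne_zero]
  rw [hset]
  have e : {g : ZMod 3 → ZMod 3 // ∀ y, g y ≠ 0} ≃ (ZMod 3 → {x : ZMod 3 // x ≠ 0}) :=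
    Equiv.subtypePiEquivPi (p := fun (_ : ZMod 3) (x : ZMod 3) => x ≠ 0)
  rw [show Nat.card ↑{g : ZMod 3 → ZMod 3 | ∀ y, g y ≠ 0} = Nat.card (ZMod 3 → {x : ZMod 3 // x ≠ 0}) from Nat.card_congr e, Nat.card_pi]
  have h2 : Nat.card {x : ZMod 3 // x ≠ 0} = 2 := by
    rw [Nat.card_eq_fintype_card]
    decide
  rw [Finset.prod_congr rfl fun y _ => h2, Finset.prod_const, Finset.card_univ]
  decide

lemma card_fun_zmod3 : Nat.card (ZMod 3 → ZMod 3) = 27 := by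
  rw [Nat.card_pi]
  rw [Finset.prod_congr rfl fun y _ => Nat.card_zmod 3, Finset.prod_const, Finset.card_univ]
  decide

/-- The fraction of units among all polyfunctions over `ℤ/3^kℤ` is `8/27`:
`27 ⬝ |U_{3^k}| = 8 ⬝ Ψ(3^k)` where `Ψ(3^k) = 3^{∑_{i=1}^k s(3^i)}`. -/
theorem units_of_polyfunctions_mod_three_pow (k : ℕ) (hk : 1 ≤ k) :
    27 * Nat.card ((polyfunRing (ZMod (3 ^ k)))ˣ)
      = 8 * 3 ^ (∑ i ∈ Finset.Icc 1 k, smarandache (3 ^ i)) := by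
  haveI : NeZero (3 ^ k) := ⟨pow_ne_zero k (by norm_num)⟩
  haveI : Fact (1 < 3 ^ k) := ⟨Nat.one_lt_pow (by omega) (by norm_num)⟩
  set F : (polyfunRing (ZMod (3 ^ k))) →+ (ZMod 3 → ZMod 3) := (rho' k hk).toAddMonoidHom with hF
  have hFsurj : Function.Surjective F := rho'_surjective k hk
  have hpre1 := card_preimage F hFsurj {g : ZMod 3 → ZMod 3 | IsUnit g}
  have hpre2 := card_preimage F hFsurj (Set.univ : Set (ZMod 3 → ZMod 3))
  have hunits : Nat.card (polyfunRing (ZMod (3 ^ k)))ˣ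
      = Nat.card (F ⁻¹' {g : ZMod 3 → ZMod 3 | IsUnit g}) := by
    rw [card_units_eq]
    exact Nat.card_congr (Equiv.subtypeEquivRight fun f => isUnit_iff_rho k hk f)
  have hGpre : Nat.card (F ⁻¹' (Set.univ : Set (ZMod 3 → ZMod 3)))
      = Nat.card (polyfunRing (ZMod (3 ^ k))) := by
    rw [Set.preimage_univ]
    exact Nat.card_congr (Equiv.Set.univ _)
  have hunivB : Nat.card (Set.univ : Set (ZMod 3 → ZMod 3)) = 27 := by
    rw [Nat.card_congr (Equiv.Set.univ _)]
    exact card_fun_zmod3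
  have hG3 : Nat.card (polyfunRing (ZMod (3 ^ k)))
      = 3 ^ (∑ i ∈ Finset.Icc 1 k, smarandache (3 ^ i)) := card_polyfunRing_three_pow k hk
  have h27 : 27 * Nat.card F.ker = 3 ^ (∑ i ∈ Finset.Icc 1 k, smarandache (3 ^ i)) := by
    rw [← hG3, ← hGpre, hpre2, hunivB]
  rw [hunits, hpre1, card_units_zmod3_fun, ← h27]
  ring

end Final
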